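/- If P and K are two distinct graded weakly prime ideals of a G-graded ring R, then P ∩ K is a graded weakly 2-absorbing ideal of R. -/

import Mathlib

variable {G R : Type*} [AddGroup G] [DecidableEq G] [Ring R]

/-- `x` is a homogeneous element of the `G`-graded ring `R`. -/
def IsHomog (𝒜 : G → AddSubgroup R) (x : R) : Prop := ∃ g, x ∈ 𝒜 g

/-- A two-sided ideal is graded if it contains all homogeneous components of its elements. -/
def IsGradedIdeal (𝒜 : G → AddSubgroup R) [GradedRing 𝒜] (P : TwoSidedIdeal R) : Prop :=
  ∀ a ∈ P, ∀ g : G, (DirectSum.decompose 𝒜 a g : R) ∈ P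

/-- Graded weakly prime: a proper graded ideal `P` such that `0 ≠ IJ ⊆ P` for graded
ideals `I, J` implies `I ⊆ P` or `J ⊆ P`. -/
def IsGradedWeaklyPrime (𝒜 : G → AddSubgroup R) [GradedRing 𝒜] (P : TwoSidedIdeal R) : Prop :=
  P ≠ ⊤ ∧ IsGradedIdeal 𝒜 P ∧
    ∀ I J : TwoSidedIdeal R, IsGradedIdeal 𝒜 I → IsGradedIdeal 𝒜 J →
      (∃ a ∈ I, ∃ b ∈ J, a * b ≠ 0) → (∀ a ∈ I, ∀ b ∈ J, a * b ∈ P) →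
      I ≤ P ∨ J ≤ P

/-- Graded weakly 2-absorbing: a proper graded ideal `P` such that for homogeneous `x, y, z`,
`0 ≠ xRyRz ⊆ P` implies `xy ∈ P` or `yz ∈ P` or `xz ∈ P`. -/
def IsGradedWeakly2Absorbing (𝒜 : G → AddSubgroup R) [GradedRing 𝒜] (P : TwoSidedIdeal R) : Prop :=
  P ≠ ⊤ ∧ IsGradedIdeal 𝒜 P ∧
    ∀ x y z : R, IsHomog 𝒜 x → IsHomog 𝒜 y → IsHomog 𝒜 z →
      (∃ r s : R, x * r * y * s * z ≠ 0) → (∀ r s : R, x * r * y * s * z ∈ P) →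
      x * y ∈ P ∨ y * z ∈ P ∨ x * z ∈ P

/-! ### Auxiliary constructions -/

/-- The set of elements of the form `a * x * b * y * c`. -/
def gen2 (x y : R) : Set R := {w : R | ∃ a b c : R, w = a * x * b * y * c}

lemma mem_gen2 (x y a b c : R) : a * x * b * y * c ∈ gen2 x y := ⟨a, b, c, rfl⟩

/-- The two-sided ideal `R x R y R` generated by the products `a * x * b * y * c`. -/
def idl2 (x y : R) : TwoSidedIdeal R :=
  TwoSidedIdeal.mk' (AddSubgroup.closure (gen2 x y) : Set R)
    (zero_mem _)
    (fun h1 h2 => add_mem h1 h2)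
    (fun h => neg_mem h)
    (by
      intro r w hw
      induction hw using AddSubgroup.closure_induction with
      | mem w hw =>
        obtain ⟨a, b, c, rfl⟩ := hw
        exact AddSubgroup.subset_closure ⟨r * a, b, c, by simp [mul_assoc]⟩
      | zero => simpa using zero_mem _
      | add w1 w2 _ _ h1 h2 => rw [mul_add]; exact add_mem h1 h2
      | neg w _ h => rw [mul_neg]; exact neg_mem h)
    (by
      intro w r hw
      induction hw using AddSubgroup.closure_induction with
      | mem w hw =>
        obtain ⟨a, b, c, rfl⟩ := hw
        exact AddSubgroup.subset_closure ⟨a, b, c * r, by simp [mul_assoc]⟩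
      | zero => simpa using zero_mem _
      | add w1 w2 _ _ h1 h2 => rw [add_mul]; exact add_mem h1 h2
      | neg w _ h => rw [neg_mul]; exact neg_mem h)

lemma mem_idl2_iff (x y w : R) :
    w ∈ idl2 x y ↔ w ∈ AddSubgroup.closure (gen2 x y) := by
  simp [idl2]

lemma mem_idl2 (x y a b c : R) : a * x * b * y * c ∈ idl2 x y :=
  (mem_idl2_iff x y _).2 <| AddSubgroup.subset_closure (mem_gen2 x y a b c)

open DirectSum in
lemma decompose_gen2_mem (𝒜 : G → AddSubgroup R) [GradedRing 𝒜] {x y : R} {gx gy : G}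
    (hx : x ∈ 𝒜 gx) (hy : y ∈ 𝒜 gy) (a b c : R) (g : G) :
    (decompose 𝒜 (a * x * b * y * c) g : R) ∈ AddSubgroup.closure (gen2 x y) := by
  induction a using DirectSum.Decomposition.inductionOn 𝒜 with
  | zero => simp
  | add a1 a2 h1 h2 =>
    have : (a1 + a2) * x * b * y * c = a1 * x * b * y * c + a2 * x * b * y * c := by
      noncomm_ring
    rw [this, decompose_add]
    exact add_mem h1 h2
  | homogeneous a =>
    obtain ⟨i, ha⟩ : ∃ i, (a : R) ∈ 𝒜 i := ⟨_, a.2⟩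
    induction c using DirectSum.Decomposition.inductionOn 𝒜 with
    | zero => simp
    | add c1 c2 h1 h2 =>
      have : (a : R) * x * b * y * (c1 + c2) =
          (a : R) * x * b * y * c1 + (a : R) * x * b * y * c2 := by noncomm_ring
      rw [this, decompose_add]
      exact add_mem h1 h2
    | homogeneous c =>
      obtain ⟨k, hc⟩ : ∃ k, (c : R) ∈ 𝒜 k := ⟨_, c.2⟩
      have hax : (a : R) * x ∈ 𝒜 (i + gx) := SetLike.mul_mem_graded ha hx
      have hyc : y * (c : R) ∈ 𝒜 (gy + k) := SetLike.mul_mem_graded hy hc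
      have hg : g = (i + gx) + (-(i + gx) + g) := (add_neg_cancel_left _ _).symm
      set j : G := -(i + gx) + g with hj
      have hj2 : j = (j - (gy + k)) + (gy + k) := (sub_add_cancel j (gy + k)).symm
      have hsplit : (a : R) * x * b * y * (c : R) = ((a : R) * x) * (b * (y * (c : R))) := by
        noncomm_ring
      rw [hsplit, hg, coe_decompose_mul_add_of_left_mem 𝒜 hax]
      rw [hj2, coe_decompose_mul_add_of_right_mem 𝒜 hyc]
      refine AddSubgroup.subset_closure ⟨(a : R), (decompose 𝒜 b (j - (gy + k)) : R), (c : R), ?_⟩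
      noncomm_ring

lemma isGradedIdeal_idl2 (𝒜 : G → AddSubgroup R) [GradedRing 𝒜] {x y : R} {gx gy : G}
    (hx : x ∈ 𝒜 gx) (hy : y ∈ 𝒜 gy) : IsGradedIdeal 𝒜 (idl2 x y) := by
  intro w hw g
  rw [mem_idl2_iff] at hw ⊢
  induction hw using AddSubgroup.closure_induction generalizing g with
  | mem w hw =>
    obtain ⟨a, b, c, rfl⟩ := hw
    exact decompose_gen2_mem 𝒜 hx hy a b c g
  | zero =>
    have h0 : (DirectSum.decompose 𝒜 (0 : R) g : R) = 0 := by simp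
    rw [h0]
    exact AddSubgroup.zero_mem _
  | add w1 w2 _ _ h1 h2 =>
    rw [DirectSum.decompose_add]
    exact add_mem (h1 g) (h2 g)
  | neg w _ h =>
    rw [DirectSum.decompose_neg]
    push_cast
    exact neg_mem (h g)

/-- Products of elements of `R x₁ R y₁ R` and `R x₂ R y₂ R` land in `Q` provided all the
"skeleton" products do. -/
lemma idl2_mul_mem (Q : TwoSidedIdeal R) {x1 y1 x2 y2 : R}
    (H : ∀ u v w : R, x1 * u * y1 * v * x2 * w * y2 ∈ Q) :
    ∀ a ∈ idl2 x1 y1, ∀ b ∈ idl2 x2 y2, a * b ∈ Q := by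
  intro a ha b hb
  rw [mem_idl2_iff] at ha hb
  induction ha using AddSubgroup.closure_induction with
  | mem a ha =>
    induction hb using AddSubgroup.closure_induction with
    | mem b hb =>
      obtain ⟨a1, b1, c1, rfl⟩ := ha
      obtain ⟨a2, b2, c2, rfl⟩ := hb
      have : a1 * x1 * b1 * y1 * c1 * (a2 * x2 * b2 * y2 * c2) =
          a1 * (x1 * b1 * y1 * (c1 * a2) * x2 * b2 * y2) * c2 := by noncomm_ring
      rw [this]
      exact Q.mul_mem_right _ _ (Q.mul_mem_left _ _ (H b1 (c1 * a2) b2))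
    | zero => simpa using Q.zero_mem
    | add b1 b2 _ _ h1 h2 => rw [mul_add]; exact Q.add_mem h1 h2
    | neg b _ h => rw [mul_neg]; exact Q.neg_mem h
  | zero => simpa using Q.zero_mem
  | add a1 a2 _ _ h1 h2 => rw [add_mul]; exact Q.add_mem h1 h2
  | neg a _ h => rw [neg_mul]; exact Q.neg_mem h

/-- The key dichotomies obtained from a graded weakly prime ideal. -/
lemma weaklyPrime_dichotomy (𝒜 : G → AddSubgroup R) [GradedRing 𝒜] {Q : TwoSidedIdeal R}
    (hQ : IsGradedWeaklyPrime 𝒜 Q) {x y z : R}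
    (hx : IsHomog 𝒜 x) (hy : IsHomog 𝒜 y) (hz : IsHomog 𝒜 z)
    (hne : ∃ r s : R, x * r * y * s * z ≠ 0) (hsub : ∀ r s : R, x * r * y * s * z ∈ Q) :
    (x ∈ Q ∨ y * z ∈ Q) ∧ (x * y ∈ Q ∨ z ∈ Q) := by
  obtain ⟨gx, hx⟩ := hx
  obtain ⟨gy, hy⟩ := hy
  obtain ⟨gz, hz⟩ := hz
  have h1 : (1 : R) ∈ 𝒜 0 := SetLike.one_mem_graded 𝒜
  obtain ⟨r, s, hrs⟩ := hne
  constructor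
  · -- split `R x R · R y R z R`
    have := hQ.2.2 (idl2 x 1) (idl2 y z)
      (isGradedIdeal_idl2 𝒜 hx h1) (isGradedIdeal_idl2 𝒜 hy hz)
      ⟨x * r, by simpa [mul_assoc] using mem_idl2 x 1 1 r 1,
       y * s * z, by simpa [mul_assoc] using mem_idl2 y z 1 s 1,
       by rw [show x * r * (y * s * z) = x * r * y * s * z by noncomm_ring]; exact hrs⟩
      (idl2_mul_mem Q fun u v w => by
        have : x * u * 1 * v * y * w * z = x * (u * v) * y * w * z := by noncomm_ring
        rw [this]; exact hsub _ _)
    rcases this with h | h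
    · exact Or.inl (h (by simpa [mul_assoc] using mem_idl2 x 1 1 1 1))
    · exact Or.inr (h (by simpa [mul_assoc] using mem_idl2 y z 1 1 1))
  · -- split `R x R y R · R z R`
    have := hQ.2.2 (idl2 x y) (idl2 z 1)
      (isGradedIdeal_idl2 𝒜 hx hy) (isGradedIdeal_idl2 𝒜 hz h1)
      ⟨x * r * y, by simpa [mul_assoc] using mem_idl2 x y 1 r 1,
       s * z, by simpa [mul_assoc] using mem_idl2 z 1 s 1 1,
       by rw [show x * r * y * (s * z) = x * r * y * s * z by noncomm_ring]; exact hrs⟩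
      (idl2_mul_mem Q fun u v w => by
        have : x * u * y * v * z * w * 1 = x * u * y * v * z * (w * 1) := by noncomm_ring
        rw [this]; exact Q.mul_mem_right _ _ (hsub _ _))
    rcases this with h | h
    · exact Or.inl (h (by simpa [mul_assoc] using mem_idl2 x y 1 1 1))
    · exact Or.inr (h (by simpa [mul_assoc] using mem_idl2 z 1 1 1 1))

/-- Each weakly prime ideal containing all `x r y s z` contains two of `xy, yz, xz`. -/
lemma two_of_three (Q : TwoSidedIdeal R) {x y z : R}
    (h : (x ∈ Q ∨ y * z ∈ Q) ∧ (x * y ∈ Q ∨ z ∈ Q)) :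
    (x * y ∈ Q ∧ x * z ∈ Q) ∨ (x * y ∈ Q ∧ y * z ∈ Q) ∨ (y * z ∈ Q ∧ x * z ∈ Q) := by
  obtain ⟨h1 | h1, h2 | h2⟩ := h
  · exact Or.inl ⟨Q.mul_mem_right _ _ h1, Q.mul_mem_right _ _ h1⟩
  · exact Or.inl ⟨Q.mul_mem_right _ _ h1, Q.mul_mem_right _ _ h1⟩
  · exact Or.inr (Or.inl ⟨h2, h1⟩)
  · exact Or.inr (Or.inr ⟨h1, Q.mul_mem_left _ _ h2⟩)

/-- The intersection of two distinct graded weakly prime ideals is graded weakly 2-absorbing. -/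
theorem stmt3 (𝒜 : G → AddSubgroup R) [GradedRing 𝒜] (P K : TwoSidedIdeal R)
    (hPK : P ≠ K) (hP : IsGradedWeaklyPrime 𝒜 P) (hK : IsGradedWeaklyPrime 𝒜 K) :
    IsGradedWeakly2Absorbing 𝒜 (P ⊓ K) := by
  refine ⟨?_, ?_, ?_⟩
  · intro h
    exact hP.1 (eq_top_iff.2 (h ▸ inf_le_left))
  · intro a ha g
    rw [TwoSidedIdeal.mem_inf] at ha ⊢
    exact ⟨hP.2.1 a ha.1 g, hK.2.1 a ha.2 g⟩
  · intro x y z hx hy hz hne hsub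
    have hsubP : ∀ r s : R, x * r * y * s * z ∈ P := fun r s =>
      ((TwoSidedIdeal.mem_inf R).1 (hsub r s)).1
    have hsubK : ∀ r s : R, x * r * y * s * z ∈ K := fun r s =>
      ((TwoSidedIdeal.mem_inf R).1 (hsub r s)).2
    have hPd := two_of_three P (weaklyPrime_dichotomy 𝒜 hP hx hy hz hne hsubP)
    have hKd := two_of_three K (weaklyPrime_dichotomy 𝒜 hK hx hy hz hne hsubK)
    simp only [TwoSidedIdeal.mem_inf]
    tauto
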